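/- Let Σ be a bounded nonempty set of n×n complex matrices. Then the generalized spectral radius r(Σ) = limsup_{m→∞} (sup_{A ∈ Σ^m} r(A))^{1/m} equals sup_{m ∈ ℕ} (sup_{A ∈ Σ^m} r(A))^{1/m}, where Σ^m = {A_1 ··· A_m : A_i ∈ Σ} and r(A) is the spectral radius of A. -/

import Mathlib

open Filter

/-- The spectral radius of a complex `n × n` matrix, as a real number. -/
noncomputable def cSpecRad {n : ℕ} (A : Matrix (Fin n) (Fin n) ℂ) : ℝ :=
  (spectralRadius ℂ A).toReal

/-- The ℓ² → ℓ² operator norm of a complex `n × n` matrix. -/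
noncomputable def cOpNorm {n : ℕ} (A : Matrix (Fin n) (Fin n) ℂ) : ℝ :=
  ‖LinearMap.toContinuousLinearMap (Matrix.toEuclideanLin A)‖

/-- `Σ^m`: the set of all products of `m` elements of `Σ`. -/
def prodSet {n : ℕ} (S : Set (Matrix (Fin n) (Fin n) ℂ)) (m : ℕ) :
    Set (Matrix (Fin n) (Fin n) ℂ) :=
  {A | ∃ l : List (Matrix (Fin n) (Fin n) ℂ), l.length = m ∧ (∀ B ∈ l, B ∈ S) ∧ l.prod = A}


open scoped NNReal ENNReal


lemma cOpNorm_eq_clm {n : ℕ} (A : Matrix (Fin n) (Fin n) ℂ) :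
    cOpNorm A = ‖Matrix.toEuclideanCLM (𝕜 := ℂ) A‖ := rfl

lemma specRad_le_opNNNorm {n : ℕ} (A : Matrix (Fin n) (Fin n) ℂ) :
    spectralRadius ℂ A ≤ (‖Matrix.toEuclideanCLM (𝕜 := ℂ) A‖₊ : ℝ≥0∞) := by
  rcases Nat.eq_zero_or_pos n with h | h
  · subst h
    have hs : spectrum ℂ A = ∅ := by
      ext μ
      simp only [spectrum.mem_iff, Set.mem_empty_iff_false, iff_false, not_not]
      exact isUnit_of_subsingleton _
    simp [spectralRadius, hs]
  · haveI : Nonempty (Fin n) := ⟨⟨0, h⟩⟩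
    have hspec : spectrum ℂ (Matrix.toEuclideanCLM (𝕜 := ℂ) A) = spectrum ℂ A :=
      AlgEquiv.spectrum_eq _ _
    have : spectralRadius ℂ A = spectralRadius ℂ (Matrix.toEuclideanCLM (𝕜 := ℂ) A) := by
      unfold spectralRadius; rw [hspec]
    rw [this]
    exact spectrum.spectralRadius_le_nnnorm (𝕜 := ℂ) _

lemma specRad_ne_top {n : ℕ} (A : Matrix (Fin n) (Fin n) ℂ) :
    spectralRadius ℂ A ≠ ⊤ :=
  ne_top_of_le_ne_top ENNReal.coe_ne_top (specRad_le_opNNNorm A)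

lemma cSpecRad_nonneg {n : ℕ} (A : Matrix (Fin n) (Fin n) ℂ) : 0 ≤ cSpecRad A :=
  ENNReal.toReal_nonneg

lemma cSpecRad_le_cOpNorm {n : ℕ} (A : Matrix (Fin n) (Fin n) ℂ) :
    cSpecRad A ≤ cOpNorm A := by
  have h := ENNReal.toReal_mono ENNReal.coe_ne_top (specRad_le_opNNNorm A)
  rw [ENNReal.coe_toReal, coe_nnnorm] at h
  rw [cOpNorm_eq_clm]
  exact h

lemma cOpNorm_nonneg {n : ℕ} (A : Matrix (Fin n) (Fin n) ℂ) : 0 ≤ cOpNorm A :=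
  norm_nonneg _

lemma cOpNorm_one_le {n : ℕ} : cOpNorm (1 : Matrix (Fin n) (Fin n) ℂ) ≤ 1 := by
  rw [cOpNorm_eq_clm, map_one]
  exact ContinuousLinearMap.norm_id_le

lemma cOpNorm_mul_le {n : ℕ} (A B : Matrix (Fin n) (Fin n) ℂ) :
    cOpNorm (A * B) ≤ cOpNorm A * cOpNorm B := by
  rw [cOpNorm_eq_clm, cOpNorm_eq_clm, cOpNorm_eq_clm, map_mul]
  exact norm_mul_le _ _

lemma specRad_pow_le {n : ℕ} (A : Matrix (Fin n) (Fin n) ℂ) {k : ℕ} (hk : 0 < k) :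
    (spectralRadius ℂ A) ^ k ≤ spectralRadius ℂ (A ^ k) := by
  have hkR : (k : ℝ) ≠ 0 := Nat.cast_ne_zero.mpr hk.ne'
  have h1 : spectralRadius ℂ A ≤ (spectralRadius ℂ (A ^ k)) ^ ((k : ℝ)⁻¹) := by
    refine iSup₂_le fun μ hμ => ?_
    have hmem : μ ^ k ∈ spectrum ℂ (A ^ k) :=
      spectrum.pow_image_subset A k ⟨μ, hμ, rfl⟩
    have h2 : (‖μ ^ k‖₊ : ℝ≥0∞) ≤ spectralRadius ℂ (A ^ k) :=
      le_iSup₂ (f := fun ν (_ : ν ∈ spectrum ℂ (A ^ k)) => (‖ν‖₊ : ℝ≥0∞)) (μ ^ k) hmem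
    have h3 : ((‖μ‖₊ : ℝ≥0∞) ^ k) ^ ((k : ℝ)⁻¹) ≤
        (spectralRadius ℂ (A ^ k)) ^ ((k : ℝ)⁻¹) := by
      apply ENNReal.rpow_le_rpow _ (by positivity)
      simpa [nnnorm_pow, ENNReal.coe_pow] using h2
    calc (‖μ‖₊ : ℝ≥0∞) = ((‖μ‖₊ : ℝ≥0∞) ^ k) ^ ((k : ℝ)⁻¹) := by
          rw [← ENNReal.rpow_natCast _ k, ← ENNReal.rpow_mul, mul_inv_cancel₀ hkR,
            ENNReal.rpow_one]
      _ ≤ _ := h3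
  calc (spectralRadius ℂ A) ^ k ≤ ((spectralRadius ℂ (A ^ k)) ^ ((k : ℝ)⁻¹)) ^ k :=
        pow_le_pow_left' h1 k
    _ = spectralRadius ℂ (A ^ k) := by
        rw [← ENNReal.rpow_natCast _ k, ← ENNReal.rpow_mul, inv_mul_cancel₀ hkR,
          ENNReal.rpow_one]

lemma cSpecRad_pow_le {n : ℕ} (A : Matrix (Fin n) (Fin n) ℂ) {k : ℕ} (hk : 0 < k) :
    (cSpecRad A) ^ k ≤ cSpecRad (A ^ k) := by
  rw [cSpecRad, cSpecRad, ← ENNReal.toReal_pow]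
  exact ENNReal.toReal_mono (specRad_ne_top _) (specRad_pow_le A hk)

lemma prodSet_nonempty {n : ℕ} {S : Set (Matrix (Fin n) (Fin n) ℂ)} (hne : S.Nonempty)
    (m : ℕ) : (prodSet S m).Nonempty := by
  obtain ⟨A₀, hA₀⟩ := hne
  exact ⟨(List.replicate m A₀).prod, List.replicate m A₀, List.length_replicate,
    fun B hB => (List.eq_of_mem_replicate hB) ▸ hA₀, rfl⟩

lemma mul_mem_prodSet {n : ℕ} {S : Set (Matrix (Fin n) (Fin n) ℂ)} {A B : Matrix (Fin n) (Fin n) ℂ}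
    {m m' : ℕ} (hA : A ∈ prodSet S m) (hB : B ∈ prodSet S m') : A * B ∈ prodSet S (m + m') := by
  obtain ⟨l, hl, hlS, rfl⟩ := hA
  obtain ⟨l', hl', hl'S, rfl⟩ := hB
  refine ⟨l ++ l', by simp [hl, hl'], fun B hB => ?_, by rw [List.prod_append]⟩
  rcases List.mem_append.mp hB with h | h
  · exact hlS _ h
  · exact hl'S _ h

lemma pow_mem_prodSet {n : ℕ} {S : Set (Matrix (Fin n) (Fin n) ℂ)} {A : Matrix (Fin n) (Fin n) ℂ}
    {m : ℕ} (hA : A ∈ prodSet S m) (k : ℕ) : A ^ k ∈ prodSet S (m * k) := by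
  induction k with
  | zero => exact ⟨[], rfl, by simp, by simp⟩
  | succ k ih =>
      have h := mul_mem_prodSet ih hA
      rw [pow_succ]
      have : m * k + m = m * (k + 1) := by ring
      rwa [this] at h

lemma cSpecRad_mem_prodSet_le {n : ℕ} {S : Set (Matrix (Fin n) (Fin n) ℂ)} {C : ℝ}
    (hC : 1 ≤ C) (hCb : ∀ A ∈ S, cOpNorm A ≤ C) {m : ℕ} {A : Matrix (Fin n) (Fin n) ℂ}
    (hA : A ∈ prodSet S m) : cSpecRad A ≤ C ^ m := by
  refine (cSpecRad_le_cOpNorm A).trans ?_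
  obtain ⟨l, rfl, hlS, rfl⟩ := hA
  induction l with
  | nil => simpa using cOpNorm_one_le
  | cons a t ih =>
      simp only [List.prod_cons, List.length_cons]
      calc cOpNorm (a * t.prod) ≤ cOpNorm a * cOpNorm t.prod := cOpNorm_mul_le _ _
        _ ≤ C * C ^ t.length := by
            apply mul_le_mul (hCb a (hlS a (List.mem_cons_self)))
              (ih (fun B hB => hlS B (List.mem_cons_of_mem _ hB))) (cOpNorm_nonneg _)
              (by linarith)
        _ = C ^ (t.length + 1) := by ring

/-- For a bounded nonempty set `Σ` of `n × n` complex matrices, the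
generalized spectral radius `limsup_{m→∞} (sup_{A ∈ Σ^m} r(A))^{1/m}` equals
`sup_{m ≥ 1} (sup_{A ∈ Σ^m} r(A))^{1/m}`. -/
theorem generalized_spectral_radius_limsup_eq_sup {n : ℕ}
    (S : Set (Matrix (Fin n) (Fin n) ℂ)) (hne : S.Nonempty)
    (hbdd : ∃ C : ℝ, ∀ A ∈ S, cOpNorm A ≤ C) :
    limsup (fun m : ℕ => (sSup (cSpecRad '' prodSet S m)) ^ ((m : ℝ)⁻¹)) atTop =
      ⨆ m : ℕ, (sSup (cSpecRad '' prodSet S (m + 1))) ^ (((m : ℝ) + 1)⁻¹) := by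
  obtain ⟨C₀, hC₀⟩ := hbdd
  set C := max C₀ 1 with hCdef
  have hC1 : 1 ≤ C := le_max_right _ _
  have hC0 : (0 : ℝ) < C := lt_of_lt_of_le one_pos hC1
  have hCb : ∀ A ∈ S, cOpNorm A ≤ C := fun A hA => (hC₀ A hA).trans (le_max_left _ _)
  set s : ℕ → ℝ := fun m => sSup (cSpecRad '' prodSet S m) with hsdef
  set f : ℕ → ℝ := fun m => s m ^ ((m : ℝ)⁻¹) with hfdef
  have hbdd' : ∀ m, ∀ x ∈ cSpecRad '' prodSet S m, x ≤ C ^ m := by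
    rintro m x ⟨A, hA, rfl⟩
    exact cSpecRad_mem_prodSet_le hC1 hCb hA
  have hBdd : ∀ m, BddAbove (cSpecRad '' prodSet S m) := fun m => ⟨C ^ m, hbdd' m⟩
  have hsne : ∀ m, (cSpecRad '' prodSet S m).Nonempty :=
    fun m => (prodSet_nonempty hne m).image _
  have hs0 : ∀ m, 0 ≤ s m := by
    intro m
    apply Real.sSup_nonneg
    rintro x ⟨A, hA, rfl⟩
    exact cSpecRad_nonneg A
  have hsC : ∀ m, s m ≤ C ^ m := fun m => csSup_le (hsne m) (hbdd' m)
  have hf0 : ∀ m, 0 ≤ f m := fun m => Real.rpow_nonneg (hs0 m) _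
  have hfC : ∀ m, f m ≤ C := by
    intro m
    rcases Nat.eq_zero_or_pos m with rfl | hm
    · simpa [hfdef] using hC1
    · have hmR : (0 : ℝ) < (m : ℝ) := by exact_mod_cast hm
      calc f m ≤ (C ^ m) ^ ((m : ℝ)⁻¹) :=
            Real.rpow_le_rpow (hs0 m) (hsC m) (by positivity)
        _ = C := by
            rw [← Real.rpow_natCast C m, ← Real.rpow_mul hC0.le,
              mul_inv_cancel₀ hmR.ne', Real.rpow_one]
  have hbddf : IsBoundedUnder (· ≤ ·) atTop f := isBoundedUnder_of ⟨C, fun m => hfC m⟩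
  set L := limsup f atTop with hLdef
  have hL0 : 0 ≤ L := le_limsup_of_frequently_le (Frequently.of_forall fun m => hf0 m) hbddf
  have key : ∀ m : ℕ, 0 < m → f m ≤ L := by
    intro m hm
    have hmR : (0 : ℝ) < (m : ℝ) := by exact_mod_cast hm
    have hA : ∀ x ∈ cSpecRad '' prodSet S m, x ≤ L ^ m := by
      rintro x ⟨A, hAm, rfl⟩
      have hfreq : ∃ᶠ j in atTop, cSpecRad A ^ ((m : ℝ)⁻¹) ≤ f j := by
        rw [frequently_atTop]
        intro N
        refine ⟨m * max N 1, ?_, ?_⟩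
        · calc N ≤ max N 1 := le_max_left _ _
            _ = 1 * max N 1 := (one_mul _).symm
            _ ≤ m * max N 1 := Nat.mul_le_mul_right _ hm
        · set k := max N 1 with hkdef
          have hk1 : 0 < k := lt_of_lt_of_le one_pos (le_max_right _ _)
          have h1 : cSpecRad A ^ k ≤ s (m * k) :=
            (cSpecRad_pow_le A hk1).trans
              (le_csSup (hBdd _) ⟨A ^ k, pow_mem_prodSet hAm k, rfl⟩)
          have hmk0 : (0 : ℝ) < ((m * k : ℕ) : ℝ) := by
            have : 0 < m * k := Nat.mul_pos hm hk1
            exact_mod_cast this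
          have hkR : (0 : ℝ) < (k : ℝ) := by exact_mod_cast hk1
          calc cSpecRad A ^ ((m : ℝ)⁻¹)
              = (cSpecRad A ^ k) ^ (((m * k : ℕ) : ℝ)⁻¹) := by
                rw [← Real.rpow_natCast (cSpecRad A) k,
                  ← Real.rpow_mul (cSpecRad_nonneg A)]
                congr 1
                push_cast
                field_simp
            _ ≤ (s (m * k)) ^ (((m * k : ℕ) : ℝ)⁻¹) := by
                apply Real.rpow_le_rpow _ h1 (by positivity)
                exact pow_nonneg (cSpecRad_nonneg A) k
            _ = f (m * k) := rfl
      have h2 : cSpecRad A ^ ((m : ℝ)⁻¹) ≤ L := le_limsup_of_frequently_le hfreq hbddf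
      calc cSpecRad A = (cSpecRad A ^ ((m : ℝ)⁻¹)) ^ m := by
            rw [← Real.rpow_natCast (cSpecRad A ^ ((m : ℝ)⁻¹)) m,
              ← Real.rpow_mul (cSpecRad_nonneg A), inv_mul_cancel₀ hmR.ne',
              Real.rpow_one]
        _ ≤ L ^ m := pow_le_pow_left₀ (Real.rpow_nonneg (cSpecRad_nonneg A) _) h2 m
    have h3 : s m ≤ L ^ m := csSup_le (hsne m) hA
    calc f m ≤ (L ^ m) ^ ((m : ℝ)⁻¹) := Real.rpow_le_rpow (hs0 m) h3 (by positivity)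
      _ = L := by
          rw [← Real.rpow_natCast L m, ← Real.rpow_mul hL0,
            mul_inv_cancel₀ hmR.ne', Real.rpow_one]
  have hcast : ∀ m : ℕ, s (m + 1) ^ (((m : ℝ) + 1)⁻¹) = f (m + 1) := by
    intro m
    have : ((m : ℝ) + 1) = (((m + 1 : ℕ)) : ℝ) := by push_cast; ring
    rw [hfdef]
    simp only [this]
  have hrange : BddAbove (Set.range fun m : ℕ =>
      sSup (cSpecRad '' prodSet S (m + 1)) ^ (((m : ℝ) + 1)⁻¹)) := by
    refine ⟨C, ?_⟩
    rintro x ⟨m, rfl⟩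
    exact le_of_le_of_eq (le_of_eq (hcast m)) rfl |>.trans (hfC (m + 1))
  apply le_antisymm
  · apply limsup_le_of_le (isCoboundedUnder_le_of_le atTop fun m => hf0 m)
    filter_upwards [eventually_ge_atTop 1] with m hm
    obtain ⟨j, rfl⟩ : ∃ j, m = j + 1 := ⟨m - 1, (Nat.succ_pred_eq_of_pos hm).symm⟩
    calc f (j + 1) = sSup (cSpecRad '' prodSet S (j + 1)) ^ (((j : ℝ) + 1)⁻¹) :=
          (hcast j).symm
      _ ≤ _ := le_ciSup hrange j
  · apply ciSup_le
    intro m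
    exact le_of_eq (hcast m) |>.trans (key (m + 1) (Nat.succ_pos m))
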